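/- Let F : C → D be a lax gs-monoidal functor between gs-monoidal categories. Then for every morphism g : A → X in C, F(dom(g)) = dom(F(g)) as morphisms F(A) → F(A), where dom denotes the domain construction in C and D respectively. -/

import Mathlib

open CategoryTheory MonoidalCategory

universe w v u v' u'

/-- A gs-monoidal category: a symmetric monoidal category in which every object carries a
commutative comonoid structure (copy and discard), compatible with tensor products. -/
class GSCat (C : Type u) [Category.{v} C] [MonoidalCategory C] [SymmetricCategory C] where
  copy : ∀ A : C, A ⟶ A ⊗ A
  discard : ∀ A : C, A ⟶ 𝟙_ C
  copy_assoc : ∀ A : C, copy A ≫ (copy A ▷ A) ≫ (α_ A A A).hom = copy A ≫ (A ◁ copy A)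
  copy_comm : ∀ A : C, copy A ≫ (β_ A A).hom = copy A
  copy_counit_left : ∀ A : C, copy A ≫ (discard A ▷ A) ≫ (λ_ A).hom = 𝟙 A
  copy_counit_right : ∀ A : C, copy A ≫ (A ◁ discard A) ≫ (ρ_ A).hom = 𝟙 A
  copy_tensor : ∀ A X : C, copy (A ⊗ X) = (copy A ⊗ₘ copy X) ≫ tensorμ A A X X
  discard_tensor : ∀ A X : C, discard (A ⊗ X) = (discard A ⊗ₘ discard X) ≫ (λ_ (𝟙_ C)).hom
  discard_unit : discard (𝟙_ C) = 𝟙 (𝟙_ C)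

variable {C : Type u} [Category.{v} C] [MonoidalCategory C] [SymmetricCategory C] [GSCat C]

/-- The domain `dom(f) = ρ_A ∘ (id_A ⊗ (ε_X ∘ f)) ∘ Δ_A` of a morphism `f : A ⟶ X`. -/
def gsDom {A X : C} (f : A ⟶ X) : A ⟶ A :=
  GSCat.copy A ≫ (A ◁ (f ≫ GSCat.discard X)) ≫ (ρ_ A).hom

/-- A morphism is normalized if `f ∘ dom(f) = f`. -/
def GsNormalized {A X : C} (f : A ⟶ X) : Prop := gsDom f ≫ f = f

/-- A morphism is functional if `Δ_X ∘ f = (f ⊗ f) ∘ Δ_A`. -/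
def GsFunctional {A X : C} (f : A ⟶ X) : Prop :=
  f ≫ GSCat.copy X = GSCat.copy A ≫ (f ⊗ₘ f)

/-- A morphism is total if `ε_X ∘ f = ε_A`. -/
def GsTotal {A X : C} (f : A ⟶ X) : Prop := f ≫ GSCat.discard X = GSCat.discard A

/-- `f ⊒ g` : `f` agrees with `g` on the domain of `g`, i.e. `f ∘ dom(g) = g`. -/
def GsRestrict {A X : C} (f g : A ⟶ X) : Prop := gsDom g ≫ f = g

/-- A gs-monoidal category is normalized if all of its morphisms are normalized. -/
class GsNormalizedCat (C : Type u) [Category.{v} C] [MonoidalCategory C]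
    [SymmetricCategory C] [GSCat C] : Prop where
  norm : ∀ {A X : C} (f : A ⟶ X), GsNormalized f

/-- A lax gs-monoidal functor between gs-monoidal categories: a lax symmetric monoidal
functor whose structure morphisms are compatible with copy and discard. -/
structure LaxGSFun (C : Type u) (D : Type u') [Category.{v} C] [MonoidalCategory C]
    [SymmetricCategory C] [GSCat C] [Category.{v'} D] [MonoidalCategory D]
    [SymmetricCategory D] [GSCat D] where
  F : C ⥤ D
  ε : 𝟙_ D ⟶ F.obj (𝟙_ C)
  μ : ∀ A B : C, F.obj A ⊗ F.obj B ⟶ F.obj (A ⊗ B)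
  μ_natural : ∀ {A A' B B' : C} (f : A ⟶ A') (g : B ⟶ B'),
    (F.map f ⊗ₘ F.map g) ≫ μ A' B' = μ A B ≫ F.map (f ⊗ₘ g)
  assoc : ∀ A B X : C,
    (μ A B ▷ F.obj X) ≫ μ (A ⊗ B) X ≫ F.map (α_ A B X).hom =
      (α_ (F.obj A) (F.obj B) (F.obj X)).hom ≫ (F.obj A ◁ μ B X) ≫ μ A (B ⊗ X)
  left_unit : ∀ A : C,
    (ε ▷ F.obj A) ≫ μ (𝟙_ C) A ≫ F.map (λ_ A).hom = (λ_ (F.obj A)).hom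
  right_unit : ∀ A : C,
    (F.obj A ◁ ε) ≫ μ A (𝟙_ C) ≫ F.map (ρ_ A).hom = (ρ_ (F.obj A)).hom
  braided : ∀ A B : C,
    μ A B ≫ F.map (β_ A B).hom = (β_ (F.obj A) (F.obj B)).hom ≫ μ B A
  gs_copy : ∀ A : C, GSCat.copy (F.obj A) ≫ μ A A = F.map (GSCat.copy A)
  gs_discard : ∀ A : C, GSCat.discard (F.obj A) ≫ ε = F.map (GSCat.discard A)

/-- A lax gs-monoidal functor preserves domains: `F(dom g) = dom (F g)`. -/
theorem laxGS_functor_preserves_domain {D : Type u'} [Category.{v'} D] [MonoidalCategory D]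
    [SymmetricCategory D] [GSCat D] (Φ : LaxGSFun C D) {A X : C} (g : A ⟶ X) :
    Φ.F.map (gsDom g) = gsDom (Φ.F.map g) := by
  have h1 : Φ.F.map (gsDom g) =
      GSCat.copy (Φ.F.obj A) ≫ Φ.μ A A ≫ Φ.F.map (A ◁ (g ≫ GSCat.discard X)) ≫
        Φ.F.map (ρ_ A).hom := by
    simp only [gsDom, Functor.map_comp, ← Φ.gs_copy, Category.assoc]
  have h2 : (Φ.F.map (𝟙 A) ⊗ₘ Φ.F.map (g ≫ GSCat.discard X)) ≫ Φ.μ A (𝟙_ C) =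
      Φ.μ A A ≫ Φ.F.map (𝟙 A ⊗ₘ (g ≫ GSCat.discard X)) := by
    simpa using Φ.μ_natural (𝟙 A) (g ≫ GSCat.discard X)
  have h3 : Φ.μ A A ≫ Φ.F.map (A ◁ (g ≫ GSCat.discard X)) =
      (Φ.F.obj A ◁ (Φ.F.map g ≫ Φ.F.map (GSCat.discard X))) ≫ Φ.μ A (𝟙_ C) := by
    have := Φ.μ_natural g (GSCat.discard X)
    have h4 : Φ.μ A A ≫ Φ.F.map (A ◁ (g ≫ GSCat.discard X)) =
        (Φ.F.map (𝟙 A) ⊗ₘ Φ.F.map (g ≫ GSCat.discard X)) ≫ Φ.μ A (𝟙_ C) := by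
      rw [h2]; congr 1
      rw [← MonoidalCategory.id_tensorHom]
    rw [h4]; simp [MonoidalCategory.id_tensorHom]
  rw [h1, ← Category.assoc (Φ.μ A A), h3]
  rw [← Φ.gs_discard X]
  simp only [MonoidalCategory.whiskerLeft_comp, Category.assoc, Φ.right_unit]
  simp [gsDom]
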